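/- Let (V, g, J, ω) be a Hermitian vector space of complex dimension n, where ω(X,Y) = g(JX,Y). Identify real 2-forms with skew-symmetric endomorphisms via the metric. If ζ₀ is a real (1,1)-form with ζ₀ ≥ ω (i.e. ζ₀ - ω is a nonnegative (1,1)-form), then any real (1,1)-form ζ with ‖ζ - ζ₀‖ ≤ 1/(2√n) (norm on Λ²V*) is nondegenerate. -/

import Mathlib

open scoped RealInnerProductSpace

/-- perturbation lemma: on a Hermitian vector space `(V,g,J,ω)` of complex
dimension `n`, if `ζ₀` is a real (1,1)-form with `ζ₀ ≥ ω` and `ζ` is a real (1,1)-form with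
`‖ζ - ζ₀‖_{Λ²} ≤ 1/(2√n)`, then `ζ` is nondegenerate.  Here `ω(X,Y) = ⟪JX, Y⟫` and the norm
on 2-forms is computed in an orthonormal basis as `‖η‖² = ∑_{i<j} η(bᵢ,bⱼ)²`. -/
theorem one_one_form_perturbation_nondegenerate {V : Type*} [NormedAddCommGroup V]
    [InnerProductSpace ℝ V] [FiniteDimensional ℝ V] (n : ℕ)
    (hdim : Module.finrank ℝ V = 2 * n)
    (J : V →ₗ[ℝ] V) (hJ2 : ∀ x, J (J x) = -x) (hJo : ∀ x y, ⟪J x, J y⟫ = ⟪x, y⟫)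
    (ζ₀ ζ : V →ₗ[ℝ] V →ₗ[ℝ] ℝ)
    (hζ₀alt : ∀ x y, ζ₀ x y = - ζ₀ y x) (hζalt : ∀ x y, ζ x y = - ζ y x)
    (hζ₀11 : ∀ x y, ζ₀ (J x) (J y) = ζ₀ x y) (hζ11 : ∀ x y, ζ (J x) (J y) = ζ x y)
    (hpos : ∀ x, (⟪J x, J x⟫ : ℝ) ≤ ζ₀ x (J x))
    (b : OrthonormalBasis (Fin (2 * n)) ℝ V)
    (hnorm : Real.sqrt (∑ i, ∑ j, if i < j then (ζ (b i) (b j) - ζ₀ (b i) (b j)) ^ 2 else 0)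
      ≤ 1 / (2 * Real.sqrt n)) :
    ∀ x, (∀ y, ζ x y = 0) → x = 0 := by
  intro x hx
  by_contra hx0
  -- n ≥ 1
  have hn : 0 < n := by
    rcases Nat.eq_zero_or_pos n with h0 | h
    · exfalso
      subst h0
      have h0' : Module.finrank ℝ V = 0 := by simpa using hdim
      have : Subsingleton V := Module.finrank_zero_iff.mp h0'
      exact hx0 (Subsingleton.elim x 0)
    · exact h
  set η : V →ₗ[ℝ] V →ₗ[ℝ] ℝ := ζ₀ - ζ with hηdef
  have hηapp : ∀ u v : V, η u v = ζ₀ u v - ζ u v := by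
    intro u v; simp [hηdef]
  have hηalt : ∀ u v : V, η u v = - η v u := by
    intro u v; rw [hηapp, hηapp, hζ₀alt, hζalt]; ring
  have hηdiag : ∀ u : V, η u u = 0 := by
    intro u; have := hηalt u u; linarith
  -- bilinear expansion
  have hexp : ∀ u v : V,
      η u v = ∑ i, ∑ j, (b.repr u i) * (b.repr v j) * η (b i) (b j) := by
    intro u v
    conv_lhs => rw [← b.sum_repr u, ← b.sum_repr v]
    simp only [map_sum, LinearMap.sum_apply, LinearMap.map_smul, LinearMap.smul_apply,
      smul_eq_mul]
    rw [Finset.sum_comm]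
    exact Finset.sum_congr rfl fun i _ => Finset.sum_congr rfl fun j _ => by ring
  -- sum of squares of coordinates
  have hrepr : ∀ u : V, ∑ i, (b.repr u i) ^ 2 = ‖u‖ ^ 2 := by
    intro u
    have h := b.sum_inner_mul_inner u u
    rw [real_inner_self_eq_norm_sq] at h
    rw [← h]
    refine Finset.sum_congr rfl fun i _ => ?_
    rw [b.repr_apply_apply, real_inner_comm u (b i)]
    ring
  -- the full sum of squares T and the half-sum S
  set S : ℝ := ∑ i, ∑ j, if i < j then (ζ (b i) (b j) - ζ₀ (b i) (b j)) ^ 2 else 0 with hSdef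
  set T : ℝ := ∑ i, ∑ j, (η (b i) (b j)) ^ 2 with hTdef
  have hS0 : 0 ≤ S := by
    refine Finset.sum_nonneg fun i _ => Finset.sum_nonneg fun j _ => ?_
    positivity
  have hT2S : T = 2 * S := by
    have hsq : ∀ i j, (η (b i) (b j)) ^ 2 = (ζ (b i) (b j) - ζ₀ (b i) (b j)) ^ 2 := by
      intro i j; rw [hηapp]; ring
    have hptwise : ∀ i j : Fin (2 * n), (η (b i) (b j)) ^ 2 =
        (if i < j then (ζ (b i) (b j) - ζ₀ (b i) (b j)) ^ 2 else 0)
        + (if j < i then (ζ (b i) (b j) - ζ₀ (b i) (b j)) ^ 2 else 0) := by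
      intro i j
      rcases lt_trichotomy i j with h | h | h
      · rw [if_pos h, if_neg (asymm h), hsq]; ring
      · subst h
        simp [hηdiag]
      · rw [if_neg (asymm h), if_pos h, hsq]; ring
    have : T = (∑ i, ∑ j, if i < j then (ζ (b i) (b j) - ζ₀ (b i) (b j)) ^ 2 else 0)
        + (∑ i, ∑ j, if j < i then (ζ (b i) (b j) - ζ₀ (b i) (b j)) ^ 2 else 0) := by
      rw [hTdef, ← Finset.sum_add_distrib]
      refine Finset.sum_congr rfl fun i _ => ?_
      rw [← Finset.sum_add_distrib]
      exact Finset.sum_congr rfl fun j _ => hptwise i j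
    rw [this]
    have hsymm : (∑ i, ∑ j, if j < i then (ζ (b i) (b j) - ζ₀ (b i) (b j)) ^ 2 else 0) = S := by
      rw [Finset.sum_comm, hSdef]
      refine Finset.sum_congr rfl fun j _ => Finset.sum_congr rfl fun i _ => ?_
      by_cases h : j < i
      · rw [if_pos h, if_pos h]
        have h1 : ζ (b i) (b j) = - ζ (b j) (b i) := hζalt _ _
        have h2 : ζ₀ (b i) (b j) = - ζ₀ (b j) (b i) := hζ₀alt _ _
        rw [h1, h2]; ring
      · rw [if_neg h, if_neg h]
    rw [hsymm, hSdef]; ring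
  -- S ≤ 1/(4n)
  have hsqrtn : Real.sqrt n > 0 := Real.sqrt_pos.mpr (by exact_mod_cast hn)
  have hSle : S ≤ 1 / (4 * n) := by
    have h1 : Real.sqrt S ≤ 1 / (2 * Real.sqrt n) := hnorm
    have h2 : S = (Real.sqrt S) ^ 2 := (Real.sq_sqrt hS0).symm
    have h3 : (Real.sqrt S) ^ 2 ≤ (1 / (2 * Real.sqrt n)) ^ 2 :=
      pow_le_pow_left₀ (Real.sqrt_nonneg S) h1 2
    have h4 : (1 / (2 * Real.sqrt n)) ^ 2 = 1 / (4 * n) := by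
      rw [div_pow, mul_pow, Real.sq_sqrt (by positivity : (0:ℝ) ≤ (n:ℝ))]
      norm_num
    rw [h2]; rw [h4] at h3; exact h3
  -- Cauchy-Schwarz: (η x (J x))² ≤ ‖x‖² ‖J x‖² T
  set y : V := J x with hy
  have hCS : (η x y) ^ 2 ≤ (‖x‖ ^ 2 * ‖y‖ ^ 2) * T := by
    have key := Finset.sum_mul_sq_le_sq_mul_sq Finset.univ
      (fun p : Fin (2 * n) × Fin (2 * n) => (b.repr x p.1) * (b.repr y p.2))
      (fun p : Fin (2 * n) × Fin (2 * n) => η (b p.1) (b p.2))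
    have e1 : (∑ p : Fin (2 * n) × Fin (2 * n),
        ((b.repr x p.1) * (b.repr y p.2)) * η (b p.1) (b p.2)) = η x y := by
      rw [Fintype.sum_prod_type]
      exact (hexp x y).symm
    have e2 : (∑ p : Fin (2 * n) × Fin (2 * n),
        ((b.repr x p.1) * (b.repr y p.2)) ^ 2) = ‖x‖ ^ 2 * ‖y‖ ^ 2 := by
      rw [Fintype.sum_prod_type]
      rw [← hrepr x, ← hrepr y, Finset.sum_mul_sum]
      refine Finset.sum_congr rfl fun i _ => Finset.sum_congr rfl fun j _ => ?_
      ring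
    have e3 : (∑ p : Fin (2 * n) × Fin (2 * n), (η (b p.1) (b p.2)) ^ 2) = T := by
      rw [Fintype.sum_prod_type, hTdef]
    rw [e1, e2, e3] at key
    exact key
  -- lower bound: ‖x‖² ≤ η x y
  have hyx : ‖y‖ ^ 2 = ‖x‖ ^ 2 := by
    have h : ⟪y, y⟫ = ⟪x, x⟫ := hJo x x
    rw [real_inner_self_eq_norm_sq, real_inner_self_eq_norm_sq] at h
    exact h
  have hlow : ‖x‖ ^ 2 ≤ η x y := by
    have h1 := hpos x
    rw [hJo, real_inner_self_eq_norm_sq] at h1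
    rw [hηapp, hx y]
    linarith
  have hxpos : 0 < ‖x‖ ^ 2 := by
    have : ‖x‖ ≠ 0 := fun h => hx0 (norm_eq_zero.mp h)
    positivity
  -- combine
  have hfinal : ‖x‖ ^ 4 ≤ ‖x‖ ^ 4 * (1 / (2 * n)) := by
    have h1 : ‖x‖ ^ 4 ≤ (η x y) ^ 2 := by
      have := pow_le_pow_left₀ (le_of_lt hxpos) hlow 2
      calc ‖x‖ ^ 4 = (‖x‖ ^ 2) ^ 2 := by ring
        _ ≤ (η x y) ^ 2 := this
    have h2 : (‖x‖ ^ 2 * ‖y‖ ^ 2) * T ≤ ‖x‖ ^ 4 * (1 / (2 * n)) := by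
      rw [hyx, hT2S]
      have hn' : (0:ℝ) < (n:ℝ) := by exact_mod_cast hn
      have heq : 2 * (1 / (4 * (n:ℝ))) = 1 / (2 * n) := by
        field_simp; ring
      have h2S : (2:ℝ) * S ≤ 1 / (2 * n) := by
        rw [← heq]; linarith
      calc ‖x‖ ^ 2 * ‖x‖ ^ 2 * (2 * S) = ‖x‖ ^ 4 * (2 * S) := by ring
        _ ≤ ‖x‖ ^ 4 * (1 / (2 * n)) :=
            mul_le_mul_of_nonneg_left h2S (pow_nonneg (norm_nonneg x) 4)
    linarith [hCS]
  have : (1:ℝ) ≤ 1 / (2 * n) := by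
    have h4 : 0 < ‖x‖ ^ 4 := by
      have hxn : 0 < ‖x‖ := norm_pos_iff.mpr hx0
      positivity
    have := (mul_le_mul_iff_right₀ h4).mp (by linarith [hfinal] : ‖x‖ ^ 4 * 1 ≤ ‖x‖ ^ 4 * (1 / (2 * n)))
    linarith
  have : (1:ℝ) / (2 * n) ≤ 1 / 2 := by
    apply div_le_div_of_nonneg_left (by norm_num) (by norm_num)
    have : (1:ℝ) ≤ n := by exact_mod_cast hn
    linarith
  linarith
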